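/- (Fu–Lin–Zeng.) For each n ≥ 1 there exist nonnegative integers γ_{n,k}, for 0 ≤ k ≤ ⌊(n−1)/2⌋, such that Σ_{π ∈ H(2) ∩ S_n} t^{des(π)} = Σ_{k=0}^{⌊(n−1)/2⌋} γ_{n,k} t^k (1+t)^{n−1−2k}. -/

import Mathlib

/-- The number of descents of a permutation of `Fin n`. -/
def des {n : ℕ} (π : Equiv.Perm (Fin n)) : ℕ :=
  (Finset.univ.filter (fun p : Fin n × Fin n =>
    (p.2 : ℕ) = (p.1 : ℕ) + 1 ∧ π p.2 < π p.1)).card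

/-- The number of descents of the inverse permutation. -/
def ides {n : ℕ} (π : Equiv.Perm (Fin n)) : ℕ := des π⁻¹

/-- The direct sum `π ⊕ τ` of permutations: `(π ⊕ τ) i = π i` for `i < m`
and `(π ⊕ τ) (m + j) = m + τ j`. -/
def directSum {m k : ℕ} (π : Equiv.Perm (Fin m)) (τ : Equiv.Perm (Fin k)) :
    Equiv.Perm (Fin (m + k)) :=
  finSumFinEquiv.permCongr (Equiv.sumCongr π τ)

/-- The skew sum `π ⊖ τ` of permutations: `(π ⊖ τ) i = k + π i` for `i < m`
and `(π ⊖ τ) (m + j) = τ j`. -/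
def skewSum {m k : ℕ} (π : Equiv.Perm (Fin m)) (τ : Equiv.Perm (Fin k)) :
    Equiv.Perm (Fin (m + k)) :=
  (finSumFinEquiv.symm.trans
    ((Equiv.sumCongr π τ).trans (Equiv.sumComm (Fin m) (Fin k)))).trans
    (finSumFinEquiv.trans (finCongr (Nat.add_comm k m)))

/-- The separable permutations (the class `H(2)`): the smallest class of permutations
containing the trivial permutation of length 1 and closed under direct sums and
skew sums. -/
inductive SeparablePerm : {n : ℕ} → Equiv.Perm (Fin n) → Prop
  | one : SeparablePerm (1 : Equiv.Perm (Fin 1))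
  | dsum {m k : ℕ} {π : Equiv.Perm (Fin m)} {τ : Equiv.Perm (Fin k)} :
      SeparablePerm π → SeparablePerm τ → SeparablePerm (directSum π τ)
  | ssum {m k : ℕ} {π : Equiv.Perm (Fin m)} {τ : Equiv.Perm (Fin k)} :
      SeparablePerm π → SeparablePerm τ → SeparablePerm (skewSum π τ)



open Equiv Finset in
def natAct {n : ℕ} (π : Equiv.Perm (Fin n)) (i : ℕ) : ℕ :=
  if h : i < n then (π ⟨i, h⟩ : ℕ) else i

lemma natAct_lt {n : ℕ} (π : Equiv.Perm (Fin n)) {i : ℕ} (h : i < n) :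
    natAct π i < n := by
  simp [natAct, h, Fin.is_lt]

lemma natAct_apply {n : ℕ} (π : Equiv.Perm (Fin n)) (i : Fin n) :
    natAct π i = π i := by
  simp [natAct, i.is_lt]

lemma natAct_ext {n : ℕ} {π π' : Equiv.Perm (Fin n)}
    (h : ∀ i, i < n → natAct π i = natAct π' i) : π = π' := by
  ext i
  have := h i i.is_lt
  simpa [natAct, i.is_lt, Fin.ext_iff] using this

lemma natAct_directSum {m k : ℕ} (σ : Equiv.Perm (Fin m)) (τ : Equiv.Perm (Fin k))
    (i : ℕ) (hi : i < m + k) :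
    natAct (directSum σ τ) i = if i < m then natAct σ i else m + natAct τ (i - m) := by
  by_cases h : i < m
  · have : (⟨i, hi⟩ : Fin (m+k)) = Fin.castAdd k ⟨i, h⟩ := rfl
    simp only [natAct, dif_pos hi, dif_pos h, directSum, Equiv.permCongr_apply, this,
      finSumFinEquiv_symm_apply_castAdd]
    simp [h]
  · have hik : i - m < k := by omega
    have : (⟨i, hi⟩ : Fin (m+k)) = Fin.natAdd m ⟨i - m, hik⟩ := by
      simp [Fin.ext_iff]; omega
    simp only [natAct, dif_pos hi, if_neg h, dif_pos hik, directSum, Equiv.permCongr_apply, this,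
      finSumFinEquiv_symm_apply_natAdd]
    simp [h, hik]

lemma natAct_skewSum {m k : ℕ} (σ : Equiv.Perm (Fin m)) (τ : Equiv.Perm (Fin k))
    (i : ℕ) (hi : i < m + k) :
    natAct (skewSum σ τ) i = if i < m then k + natAct σ i else natAct τ (i - m) := by
  by_cases h : i < m
  · have he : (⟨i, hi⟩ : Fin (m+k)) = Fin.castAdd k ⟨i, h⟩ := rfl
    simp only [natAct, dif_pos hi, if_pos h, skewSum, Equiv.trans_apply, he,
      finSumFinEquiv_symm_apply_castAdd]
    simp [h]
    rw [Nat.add_comm]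
  · have hik : i - m < k := by omega
    have he : (⟨i, hi⟩ : Fin (m+k)) = Fin.natAdd m ⟨i - m, hik⟩ := by
      simp [Fin.ext_iff]; omega
    simp only [natAct, dif_pos hi, if_neg h, skewSum, Equiv.trans_apply, he,
      finSumFinEquiv_symm_apply_natAdd]
    simp [hik]

/-- Transport of a permutation along an equality of sizes. -/
def castPerm {a b : ℕ} (h : a = b) (π : Equiv.Perm (Fin a)) : Equiv.Perm (Fin b) :=
  (finCongr h).permCongr π

@[simp] lemma castPerm_rfl {a : ℕ} (π : Equiv.Perm (Fin a)) : castPerm rfl π = π := by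
  ext i; simp [castPerm]

@[simp] lemma natAct_castPerm {a b : ℕ} (h : a = b) (π : Equiv.Perm (Fin a)) (i : ℕ) :
    natAct (castPerm h π) i = natAct π i := by
  subst h; simp

@[simp] lemma des_castPerm {a b : ℕ} (h : a = b) (π : Equiv.Perm (Fin a)) :
    des (castPerm h π) = des π := by
  subst h; simp

lemma sep_castPerm {a b : ℕ} (h : a = b) {π : Equiv.Perm (Fin a)}
    (hπ : SeparablePerm π) : SeparablePerm (castPerm h π) := by
  subst h; simpa using hπ

lemma des_eq_card {n : ℕ} (π : Equiv.Perm (Fin n)) :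
    des π = ((Finset.range (n-1)).filter
      (fun i => natAct π (i+1) < natAct π i)).card := by
  classical
  unfold des
  apply Finset.card_bij (fun p _ => (p.1 : ℕ))
  · rintro ⟨x, y⟩ hp
    simp only [Finset.mem_filter, Finset.mem_univ, true_and] at hp
    obtain ⟨h1, h2⟩ := hp
    have hy : (y:ℕ) < n := y.is_lt
    simp only [Finset.mem_filter, Finset.mem_range]
    constructor
    · omega
    · have : natAct π ((x:ℕ)+1) = (π y : ℕ) := by rw [← h1]; simp [natAct_apply]
      rw [this]
      simpa [natAct_apply] using h2
  · rintro ⟨x, y⟩ hp ⟨x', y'⟩ hp' hxy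
    simp only [Finset.mem_filter, Finset.mem_univ, true_and] at hp hp'
    have : x = x' := Fin.ext hxy
    subst this
    have : y = y' := Fin.ext (by omega)
    simp [this]
  · intro i hi
    simp only [Finset.mem_filter, Finset.mem_range] at hi
    obtain ⟨hi1, hi2⟩ := hi
    have h1 : i < n := by omega
    have h2 : i + 1 < n := by omega
    refine ⟨(⟨i, h1⟩, ⟨i+1, h2⟩), Finset.mem_filter.mpr ⟨Finset.mem_univ _, rfl, ?_⟩, rfl⟩
    have e1 : natAct π (i+1) = (π ⟨i+1, h2⟩ : ℕ) := by simp [natAct, h2]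
    have e2 : natAct π i = (π ⟨i, h1⟩ : ℕ) := by simp [natAct, h1]
    rw [e1, e2] at hi2
    exact hi2

lemma des_eq_sum {n : ℕ} (π : Equiv.Perm (Fin n)) :
    des π = ∑ i ∈ Finset.range (n-1), if natAct π (i+1) < natAct π i then 1 else 0 := by
  classical
  rw [des_eq_card, Finset.card_filter]

lemma des_directSum {m k : ℕ} (σ : Equiv.Perm (Fin m)) (τ : Equiv.Perm (Fin k))
    (hm : 1 ≤ m) (hk : 1 ≤ k) :
    des (directSum σ τ) = des σ + des τ := by
  classical
  rw [des_eq_sum (directSum σ τ), des_eq_sum σ, des_eq_sum τ]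
  have hsplit : Finset.range (m + k - 1)
      = Finset.range (m - 1) ∪ Finset.Ico (m-1) (m + k - 1) := by
    rw [Finset.range_eq_Ico, ← Finset.Ico_union_Ico_eq_Ico (by omega : 0 ≤ m - 1)
      (by omega : m - 1 ≤ m + k - 1), ← Finset.range_eq_Ico]
  rw [hsplit, Finset.sum_union (by
    simp only [Finset.range_eq_Ico]
    exact Finset.Ico_disjoint_Ico_consecutive 0 (m-1) (m+k-1))]
  have h1 : ∑ i ∈ Finset.range (m - 1),
      (if natAct (directSum σ τ) (i+1) < natAct (directSum σ τ) i then 1 else 0)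
      = ∑ i ∈ Finset.range (m - 1), (if natAct σ (i+1) < natAct σ i then 1 else 0) := by
    apply Finset.sum_congr rfl
    intro i hi
    simp only [Finset.mem_range] at hi
    rw [natAct_directSum _ _ _ (by omega), natAct_directSum _ _ _ (by omega),
      if_pos (by omega : i + 1 < m), if_pos (by omega : i < m)]
  have h2 : ∑ i ∈ Finset.Ico (m-1) (m + k - 1),
      (if natAct (directSum σ τ) (i+1) < natAct (directSum σ τ) i then 1 else 0)
      = ∑ j ∈ Finset.range (k - 1), (if natAct τ (j+1) < natAct τ j then 1 else 0) := by
    have hsplit2 : Finset.Ico (m-1) (m+k-1) = {m-1} ∪ Finset.Ico m (m+k-1) := by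
      rw [← Finset.Ico_union_Ico_eq_Ico (by omega : m - 1 ≤ m) (by omega : m ≤ m + k - 1)]
      congr 1
      ext x
      simp only [Finset.mem_Ico, Finset.mem_singleton]
      omega
    rw [hsplit2, Finset.sum_union (by
      simp only [Finset.disjoint_left, Finset.mem_singleton, Finset.mem_Ico]
      omega)]
    have hb : (if natAct (directSum σ τ) (m-1+1) < natAct (directSum σ τ) (m-1) then (1:ℕ) else 0)
        = 0 := by
      rw [if_neg]
      rw [natAct_directSum _ _ _ (by omega), natAct_directSum _ _ _ (by omega),
        if_neg (by omega : ¬ (m - 1 + 1 < m)), if_pos (by omega : m - 1 < m)]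
      have := natAct_lt σ (show m - 1 < m by omega)
      omega
    rw [Finset.sum_singleton, hb, zero_add]
    rw [Finset.sum_Ico_eq_sum_range]
    apply Finset.sum_congr (by congr 1; omega)
    intro j hj
    simp only [Finset.mem_range] at hj
    rw [natAct_directSum _ _ _ (by omega), natAct_directSum _ _ _ (by omega),
      if_neg (by omega : ¬ (m + j + 1 < m)), if_neg (by omega : ¬ (m + j < m))]
    have e1 : m + j + 1 - m = j + 1 := by omega
    have e2 : m + j - m = j := by omega
    rw [e1, e2]
    simp only [Nat.add_lt_add_iff_left]
  rw [h1, h2]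

lemma natAct_revPerm_mul {n : ℕ} (π : Equiv.Perm (Fin n)) (i : ℕ) (hi : i < n) :
    natAct (Fin.revPerm * π) i = n - 1 - natAct π i := by
  simp only [natAct, dif_pos hi]
  simp [Equiv.Perm.mul_apply, Fin.rev]
  omega

lemma des_add_des_rev {n : ℕ} (π : Equiv.Perm (Fin n)) :
    des π + des (Fin.revPerm * π) = n - 1 := by
  classical
  rw [des_eq_sum π, des_eq_sum (Fin.revPerm * π), ← Finset.sum_add_distrib]
  have : ∀ i ∈ Finset.range (n-1),
      ((if natAct π (i+1) < natAct π i then (1:ℕ) else 0) +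
       (if natAct (Fin.revPerm * π) (i+1) < natAct (Fin.revPerm * π) i then 1 else 0)) = 1 := by
    intro i hi
    simp only [Finset.mem_range] at hi
    have h1 : i < n := by omega
    have h2 : i + 1 < n := by omega
    rw [natAct_revPerm_mul _ _ h2, natAct_revPerm_mul _ _ h1]
    have hne : natAct π (i+1) ≠ natAct π i := by
      simp only [natAct, dif_pos h1, dif_pos h2]
      intro hc
      have := π.injective (Fin.ext hc)
      simp only [Fin.mk.injEq] at this
      omega
    have la := natAct_lt π h1
    have lb := natAct_lt π h2
    by_cases h : natAct π (i+1) < natAct π i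
    · rw [if_pos h, if_neg (by omega)]
    · rw [if_neg h, if_pos (by omega)]
  rw [Finset.sum_congr rfl this]
  simp

lemma SeparablePerm.one_le {n : ℕ} {π : Equiv.Perm (Fin n)} (h : SeparablePerm π) :
    1 ≤ n := by
  induction h with
  | one => omega
  | dsum h1 h2 ih1 ih2 => omega
  | ssum h1 h2 ih1 ih2 => omega

lemma revPerm_mul_directSum {m k : ℕ} (σ : Equiv.Perm (Fin m)) (τ : Equiv.Perm (Fin k)) :
    Fin.revPerm * directSum σ τ = skewSum (Fin.revPerm * σ) (Fin.revPerm * τ) := by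
  apply natAct_ext
  intro i hi
  rw [natAct_revPerm_mul _ _ hi, natAct_directSum _ _ _ hi, natAct_skewSum _ _ _ hi]
  by_cases h : i < m
  · rw [if_pos h, if_pos h, natAct_revPerm_mul _ _ h]
    have := natAct_lt σ h
    omega
  · rw [if_neg h, if_neg h, natAct_revPerm_mul _ _ (by omega : i - m < k)]
    have := natAct_lt τ (by omega : i - m < k)
    omega

lemma revPerm_mul_skewSum {m k : ℕ} (σ : Equiv.Perm (Fin m)) (τ : Equiv.Perm (Fin k)) :
    Fin.revPerm * skewSum σ τ = directSum (Fin.revPerm * σ) (Fin.revPerm * τ) := by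
  apply natAct_ext
  intro i hi
  rw [natAct_revPerm_mul _ _ hi, natAct_skewSum _ _ _ hi, natAct_directSum _ _ _ hi]
  by_cases h : i < m
  · rw [if_pos h, if_pos h, natAct_revPerm_mul _ _ h]
    have := natAct_lt σ h
    omega
  · rw [if_neg h, if_neg h, natAct_revPerm_mul _ _ (by omega : i - m < k)]
    have := natAct_lt τ (by omega : i - m < k)
    omega

lemma sep_revPerm_mul {n : ℕ} {π : Equiv.Perm (Fin n)} (h : SeparablePerm π) :
    SeparablePerm (Fin.revPerm * π) := by
  induction h with
  | one =>
      have : Fin.revPerm * (1 : Equiv.Perm (Fin 1)) = 1 := by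
        apply natAct_ext; intro i hi
        interval_cases i
        rw [natAct_revPerm_mul _ _ (by omega)]
        simp [natAct]
      rw [this]
      exact SeparablePerm.one
  | dsum h1 h2 ih1 ih2 =>
      rw [revPerm_mul_directSum]
      exact SeparablePerm.ssum ih1 ih2
  | ssum h1 h2 ih1 ih2 =>
      rw [revPerm_mul_skewSum]
      exact SeparablePerm.dsum ih1 ih2

lemma des_skewSum {m k : ℕ} (σ : Equiv.Perm (Fin m)) (τ : Equiv.Perm (Fin k))
    (hm : 1 ≤ m) (hk : 1 ≤ k) :
    des (skewSum σ τ) = des σ + des τ + 1 := by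
  have h1 := des_add_des_rev (skewSum σ τ)
  rw [revPerm_mul_skewSum] at h1
  rw [des_directSum _ _ hm hk] at h1
  have h2 := des_add_des_rev σ
  have h3 := des_add_des_rev τ
  have h4 := des_add_des_rev (directSum σ τ)
  -- des σ ≤ m - 1 etc.
  have hb1 : des σ + des (Fin.revPerm * σ) = m - 1 := h2
  have hb2 : des τ + des (Fin.revPerm * τ) = k - 1 := h3
  omega

/-- `π` maps positions `< m` to values `< m`. -/
def IsSplit {n : ℕ} (m : ℕ) (π : Equiv.Perm (Fin n)) : Prop :=
  ∀ i, i < n → (natAct π i < m ↔ i < m)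

lemma isSplit_castPerm {a b m : ℕ} (h : a = b) (π : Equiv.Perm (Fin a)) :
    IsSplit m (castPerm h π) ↔ IsSplit m π := by
  subst h; simp [IsSplit]

lemma isSplit_directSum {m k : ℕ} (σ : Equiv.Perm (Fin m)) (τ : Equiv.Perm (Fin k)) :
    IsSplit m (directSum σ τ) := by
  intro i hi
  rw [natAct_directSum _ _ _ hi]
  by_cases h : i < m
  · rw [if_pos h]
    simpa [h] using natAct_lt σ h
  · rw [if_neg h]
    simp [h]

lemma isSplit_directSum_shift {m k j : ℕ} (σ : Equiv.Perm (Fin m)) (τ : Equiv.Perm (Fin k)) :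
    IsSplit (m + j) (directSum σ τ) ↔ IsSplit j τ := by
  constructor
  · intro hs l hl
    have := hs (m + l) (by omega)
    rw [natAct_directSum _ _ _ (by omega), if_neg (by omega)] at this
    have e : m + l - m = l := by omega
    rw [e] at this
    constructor
    · intro h; omega
    · intro h; omega
  · intro hs i hi
    rw [natAct_directSum _ _ _ hi]
    by_cases h : i < m
    · rw [if_pos h]
      have := natAct_lt σ h
      constructor <;> intro <;> omega
    · rw [if_neg h]
      have := hs (i - m) (by omega)
      constructor <;> intro <;> omega

lemma isSplit_directSum_left {m k j : ℕ} (σ : Equiv.Perm (Fin m)) (τ : Equiv.Perm (Fin k))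
    (hj : j ≤ m) (hs : IsSplit j (directSum σ τ)) : IsSplit j σ := by
  intro i hi
  have := hs i (by omega)
  rw [natAct_directSum _ _ _ (by omega), if_pos hi] at this
  exact this

lemma castPerm_castPerm {a b c : ℕ} (h1 : a = b) (h2 : b = c) (π : Equiv.Perm (Fin a)) :
    castPerm h2 (castPerm h1 π) = castPerm (h1.trans h2) π := by
  subst h1; subst h2; simp

lemma directSum_castPerm_left {a a' k : ℕ} (h : a = a') (σ : Equiv.Perm (Fin a))
    (τ : Equiv.Perm (Fin k)) :
    directSum (castPerm h σ) τ = castPerm (by rw [h]) (directSum σ τ) := by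
  subst h; simp

lemma directSum_castPerm_right {a k k' : ℕ} (h : k = k') (σ : Equiv.Perm (Fin a))
    (τ : Equiv.Perm (Fin k)) :
    directSum σ (castPerm h τ) = castPerm (by rw [h]) (directSum σ τ) := by
  subst h; simp

lemma directSum_assoc {a b c : ℕ} (σ : Equiv.Perm (Fin a)) (τ : Equiv.Perm (Fin b))
    (ρ : Equiv.Perm (Fin c)) :
    directSum (directSum σ τ) ρ
      = castPerm (Nat.add_assoc a b c).symm (directSum σ (directSum τ ρ)) := by
  apply natAct_ext
  intro i hi
  rw [natAct_castPerm]
  rw [natAct_directSum _ _ _ (by omega), natAct_directSum _ _ _ (by omega : i < a + (b + c))]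
  by_cases h1 : i < a
  · rw [if_pos (by omega : i < a + b), natAct_directSum _ _ _ (by omega), if_pos h1, if_pos h1]
  · by_cases h2 : i < a + b
    · rw [if_pos h2, if_neg h1, natAct_directSum _ _ _ (by omega), if_neg h1,
        natAct_directSum _ _ _ (by omega : i - a < b + c), if_pos (by omega : i - a < b)]
    · rw [if_neg h2, if_neg h1, natAct_directSum _ _ _ (by omega : i - a < b + c),
        if_neg (by omega : ¬ (i - a < b))]
      have e : i - (a+b) = i - a - b := by omega
      rw [e]
      omega

lemma castPerm_self {a : ℕ} (h : a = a) (π : Equiv.Perm (Fin a)) : castPerm h π = π :=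
  castPerm_rfl π

lemma exists_decomp_of_isSplit {n m : ℕ} (π : Equiv.Perm (Fin n)) (hm : m ≤ n)
    (hs : IsSplit m π) :
    ∃ (σ : Equiv.Perm (Fin m)) (τ : Equiv.Perm (Fin (n - m))),
      π = castPerm (by omega) (directSum σ τ) := by
  have hval : ∀ i : Fin m, natAct π i < m := fun i => (hs i (by omega)).mpr i.is_lt
  have hval2 : ∀ j : Fin (n - m), m ≤ natAct π (m + j) ∧ natAct π (m + j) < n := by
    intro j
    have hj : m + (j : ℕ) < n := by omega
    constructor
    · by_contra hc
      have := (hs (m + j) hj).mp (by omega)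
      omega
    · exact natAct_lt π hj
  have hinj : ∀ i j : ℕ, i < n → j < n → natAct π i = natAct π j → i = j := by
    intro i j hi hj hij
    simp only [natAct, dif_pos hi, dif_pos hj] at hij
    have := π.injective (Fin.ext hij)
    simpa [Fin.ext_iff] using this
  let f : Fin m → Fin m := fun i => ⟨natAct π i, hval i⟩
  have hfinj : Function.Injective f := by
    intro i j hij
    simp only [f, Fin.mk.injEq] at hij
    exact Fin.ext (hinj i j (by omega) (by omega) hij)
  let g : Fin (n - m) → Fin (n - m) := fun j => ⟨natAct π (m + j) - m, by
    have := hval2 j; omega⟩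
  have hginj : Function.Injective g := by
    intro i j hij
    simp only [g, Fin.mk.injEq] at hij
    have hi := hval2 i
    have hj := hval2 j
    have : natAct π (m + i) = natAct π (m + j) := by omega
    have := hinj (m + i) (m + j) (by omega) (by omega) this
    exact Fin.ext (by omega)
  refine ⟨Equiv.ofBijective f ((Finite.injective_iff_bijective).mp hfinj),
    Equiv.ofBijective g ((Finite.injective_iff_bijective).mp hginj), ?_⟩
  apply natAct_ext
  intro i hi
  rw [natAct_castPerm, natAct_directSum _ _ _ (by omega : i < m + (n - m))]
  by_cases h : i < m
  · rw [if_pos h]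
    simp only [natAct, dif_pos h]
    simp only [Equiv.ofBijective_apply, f]
    simp [natAct, hi]
  · rw [if_neg h]
    have him : i - m < n - m := by omega
    simp only [natAct, dif_pos him]
    simp only [Equiv.ofBijective_apply, g]
    have e : m + (i - m) = i := by omega
    rw [e]
    have := hval2 ⟨i - m, him⟩
    simp only [e] at this
    · simp only [natAct, dif_pos hi] at this ⊢
      omega

lemma not_isSplit_skewSum {m1 k1 : ℕ} (π1 : Equiv.Perm (Fin m1)) (π2 : Equiv.Perm (Fin k1))
    (hm1 : 1 ≤ m1) (hk1 : 1 ≤ k1) {m : ℕ} (hm0 : 0 < m) (hmn : m < m1 + k1) :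
    ¬ IsSplit m (skewSum π1 π2) := by
  intro hs
  -- position 0 gives k1 < m
  have h0 := (hs 0 (by omega)).mpr hm0
  rw [natAct_skewSum _ _ _ (by omega), if_pos (by omega : 0 < m1)] at h0
  have hk1m : k1 < m := by omega
  -- position m1 has value < k1 < m, so m1 < m
  have h1 := (hs m1 (by omega)).mp (by
    rw [natAct_skewSum _ _ _ (by omega), if_neg (by omega)]
    have : m1 - m1 = 0 := by omega
    rw [this]
    have := natAct_lt π2 (show 0 < k1 by omega)
    omega)
  -- position sent to top value n-1
  set i0 : ℕ := (π1.symm ⟨m1 - 1, by omega⟩ : ℕ) with hi0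
  have hi0lt : i0 < m1 := Fin.is_lt _
  have hv : natAct (skewSum π1 π2) i0 = k1 + (m1 - 1) := by
    rw [natAct_skewSum _ _ _ (by omega), if_pos hi0lt]
    have : natAct π1 i0 = m1 - 1 := by
      simp only [natAct, dif_pos hi0lt, hi0]
      norm_num
    rw [this]
  have := (hs i0 (by omega)).mpr (by omega)
  rw [hv] at this
  omega

lemma sep_split {n : ℕ} {π : Equiv.Perm (Fin n)} (hπ : SeparablePerm π) :
    ∀ m, 0 < m → m < n → IsSplit m π →
    ∃ (b : ℕ) (h : n = m + b) (σ : Equiv.Perm (Fin m)) (τ : Equiv.Perm (Fin b)),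
      SeparablePerm σ ∧ SeparablePerm τ ∧ π = castPerm h.symm (directSum σ τ) := by
  induction hπ with
  | one =>
      intro m hm0 hmn
      omega
  | @dsum m1 k1 π1 π2 h1 h2 ih1 ih2 =>
      intro m hm0 hmn hs
      rcases lt_trichotomy m m1 with hlt | heq | hgt
      · have hsl : IsSplit m π1 := isSplit_directSum_left _ _ (by omega) hs
        obtain ⟨b1, hb1, σ, τ1, hσ, hτ1, hEq⟩ := ih1 m hm0 hlt hsl
        refine ⟨b1 + k1, by omega, σ, directSum τ1 π2, hσ, SeparablePerm.dsum hτ1 h2, ?_⟩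
        rw [hEq, directSum_castPerm_left, directSum_assoc, castPerm_castPerm]
      · subst heq
        exact ⟨k1, rfl, π1, π2, h1, h2, (castPerm_self _ _).symm⟩
      · have e : m1 + (m - m1) = m := by omega
        have hsr : IsSplit (m - m1) π2 := by
          apply (isSplit_directSum_shift π1 π2).mp
          rw [e]
          exact hs
        obtain ⟨b, hb, σ2, τ, hσ2, hτ, hEq⟩ := ih2 (m - m1) (by omega) (by omega) hsr
        refine ⟨b, by omega, castPerm e (directSum π1 σ2), τ,
          sep_castPerm _ (SeparablePerm.dsum h1 hσ2), hτ, ?_⟩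
        rw [hEq, directSum_castPerm_right, directSum_castPerm_left, directSum_assoc,
          castPerm_castPerm, castPerm_castPerm]
  | @ssum m1 k1 π1 π2 h1 h2 ih1 ih2 =>
      intro m hm0 hmn hs
      exact absurd hs (not_isSplit_skewSum π1 π2 h1.one_le h2.one_le hm0 hmn)

lemma revPerm_mul_revPerm_mul {n : ℕ} (π : Equiv.Perm (Fin n)) :
    Fin.revPerm * (Fin.revPerm * π) = π := by
  ext i
  simp [Equiv.Perm.mul_apply]

lemma revPerm_mul_castPerm {a b : ℕ} (h : a = b) (π : Equiv.Perm (Fin a)) :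
    Fin.revPerm * castPerm h π = castPerm h (Fin.revPerm * π) := by
  subst h; simp

/-- `π` maps positions `< m` to the top `m` values. -/
def IsSkewSplit {n : ℕ} (m : ℕ) (π : Equiv.Perm (Fin n)) : Prop :=
  IsSplit m (Fin.revPerm * π)

lemma isSkewSplit_castPerm {a b m : ℕ} (h : a = b) (π : Equiv.Perm (Fin a)) :
    IsSkewSplit m (castPerm h π) ↔ IsSkewSplit m π := by
  unfold IsSkewSplit
  rw [revPerm_mul_castPerm, isSplit_castPerm]

lemma isSkewSplit_skewSum {m k : ℕ} (σ : Equiv.Perm (Fin m)) (τ : Equiv.Perm (Fin k)) :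
    IsSkewSplit m (skewSum σ τ) := by
  unfold IsSkewSplit
  rw [revPerm_mul_skewSum]
  exact isSplit_directSum _ _

lemma isSkewSplit_skewSum_shift {m k j : ℕ} (σ : Equiv.Perm (Fin m)) (τ : Equiv.Perm (Fin k)) :
    IsSkewSplit (m + j) (skewSum σ τ) ↔ IsSkewSplit j τ := by
  unfold IsSkewSplit
  rw [revPerm_mul_skewSum]
  exact isSplit_directSum_shift _ _

lemma not_isSkewSplit_directSum {m1 k1 : ℕ} (π1 : Equiv.Perm (Fin m1))
    (π2 : Equiv.Perm (Fin k1)) (hm1 : 1 ≤ m1) (hk1 : 1 ≤ k1) {m : ℕ}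
    (hm0 : 0 < m) (hmn : m < m1 + k1) : ¬ IsSkewSplit m (directSum π1 π2) := by
  unfold IsSkewSplit
  rw [revPerm_mul_directSum]
  exact not_isSplit_skewSum _ _ hm1 hk1 hm0 hmn

lemma not_isSplit_skewSum' {m1 k1 : ℕ} (π1 : Equiv.Perm (Fin m1))
    (π2 : Equiv.Perm (Fin k1)) (hm1 : 1 ≤ m1) (hk1 : 1 ≤ k1) {m : ℕ}
    (hm0 : 0 < m) (hmn : m < m1 + k1) : ¬ IsSkewSplit m (skewSum π1 π2) → True := fun _ => trivial

lemma sep_skewSplit {n : ℕ} {π : Equiv.Perm (Fin n)} (hπ : SeparablePerm π) :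
    ∀ m, 0 < m → m < n → IsSkewSplit m π →
    ∃ (b : ℕ) (h : n = m + b) (σ : Equiv.Perm (Fin m)) (τ : Equiv.Perm (Fin b)),
      SeparablePerm σ ∧ SeparablePerm τ ∧ π = castPerm h.symm (skewSum σ τ) := by
  intro m hm0 hmn hs
  obtain ⟨b, h, σ', τ', hσ', hτ', hEq⟩ := sep_split (sep_revPerm_mul hπ) m hm0 hmn hs
  refine ⟨b, h, Fin.revPerm * σ', Fin.revPerm * τ', sep_revPerm_mul hσ', sep_revPerm_mul hτ', ?_⟩
  have : π = Fin.revPerm * (Fin.revPerm * π) := (revPerm_mul_revPerm_mul π).symm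
  rw [this, hEq, revPerm_mul_castPerm, revPerm_mul_directSum]

/-- `π` is decomposable as a direct sum. -/
def PlusDec {n : ℕ} (π : Equiv.Perm (Fin n)) : Prop :=
  ∃ m, 0 < m ∧ m < n ∧ IsSplit m π

/-- `π` is decomposable as a skew sum. -/
def MinusDec {n : ℕ} (π : Equiv.Perm (Fin n)) : Prop :=
  ∃ m, 0 < m ∧ m < n ∧ IsSkewSplit m π

lemma sep_plus_or_minus {n : ℕ} {π : Equiv.Perm (Fin n)} (hπ : SeparablePerm π)
    (hn : 2 ≤ n) : PlusDec π ∨ MinusDec π := by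
  cases hπ with
  | one => omega
  | @dsum m1 k1 π1 π2 h1 h2 =>
      left
      exact ⟨m1, h1.one_le, by have := h2.one_le; omega, isSplit_directSum π1 π2⟩
  | @ssum m1 k1 π1 π2 h1 h2 =>
      right
      exact ⟨m1, h1.one_le, by have := h2.one_le; omega, isSkewSplit_skewSum π1 π2⟩

lemma sep_not_plus_and_minus {n : ℕ} {π : Equiv.Perm (Fin n)} (hπ : SeparablePerm π) :
    ¬ (PlusDec π ∧ MinusDec π) := by
  rintro ⟨⟨m, hm0, hmn, hs⟩, ⟨m', hm0', hmn', hs'⟩⟩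
  obtain ⟨b, h, σ, τ, hσ, hτ, hEq⟩ := sep_split hπ m hm0 hmn hs
  rw [hEq, isSkewSplit_castPerm] at hs'
  exact not_isSkewSplit_directSum σ τ hσ.one_le hτ.one_le hm0' (by omega) hs'

lemma directSum_inj {m k : ℕ} {σ σ' : Equiv.Perm (Fin m)} {τ τ' : Equiv.Perm (Fin k)}
    (h : directSum σ τ = directSum σ' τ') : σ = σ' ∧ τ = τ' := by
  constructor
  · apply natAct_ext
    intro i hi
    have := congrArg (fun ρ => natAct ρ i) h
    rw [natAct_directSum _ _ _ (by omega), natAct_directSum _ _ _ (by omega),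
      if_pos hi, if_pos hi] at this
    exact this
  · apply natAct_ext
    intro j hj
    have := congrArg (fun ρ => natAct ρ (m + j)) h
    rw [natAct_directSum _ _ _ (by omega), natAct_directSum _ _ _ (by omega),
      if_neg (by omega), if_neg (by omega)] at this
    have e : m + j - m = j := by omega
    rw [e] at this
    omega

lemma skewSum_inj {m k : ℕ} {σ σ' : Equiv.Perm (Fin m)} {τ τ' : Equiv.Perm (Fin k)}
    (h : skewSum σ τ = skewSum σ' τ') : σ = σ' ∧ τ = τ' := by
  have h2 : directSum (Fin.revPerm * σ) (Fin.revPerm * τ)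
      = directSum (Fin.revPerm * σ') (Fin.revPerm * τ') := by
    rw [← revPerm_mul_skewSum, ← revPerm_mul_skewSum, h]
  obtain ⟨e1, e2⟩ := directSum_inj h2
  constructor
  · have := congrArg (fun ρ => Fin.revPerm * ρ) e1
    simpa [revPerm_mul_revPerm_mul] using this
  · have := congrArg (fun ρ => Fin.revPerm * ρ) e2
    simpa [revPerm_mul_revPerm_mul] using this

section Counting
open Polynomial Finset
open scoped Classical

noncomputable def Apoly (n : ℕ) : Polynomial ℤ :=
  ∑ π ∈ univ.filter (fun π : Equiv.Perm (Fin n) => SeparablePerm π), X ^ des π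

noncomputable def Mpoly (n : ℕ) : Polynomial ℤ :=
  ∑ π ∈ univ.filter (fun π : Equiv.Perm (Fin n) => SeparablePerm π ∧ ¬ MinusDec π), X ^ des π

noncomputable def Ppoly (n : ℕ) : Polynomial ℤ :=
  ∑ π ∈ univ.filter (fun π : Equiv.Perm (Fin n) => SeparablePerm π ∧ ¬ PlusDec π), X ^ des π

noncomputable def SP (n : ℕ) : Polynomial ℤ :=
  ∑ π ∈ univ.filter (fun π : Equiv.Perm (Fin n) => SeparablePerm π ∧ PlusDec π), X ^ des π

noncomputable def SM (n : ℕ) : Polynomial ℤ :=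
  ∑ π ∈ univ.filter (fun π : Equiv.Perm (Fin n) => SeparablePerm π ∧ MinusDec π), X ^ des π

lemma perm_fin_one_eq (π : Equiv.Perm (Fin 1)) : π = 1 := by
  apply Equiv.ext
  intro i
  exact Subsingleton.elim _ _

lemma des_one_fin_one : des (1 : Equiv.Perm (Fin 1)) = 0 := by
  rw [des_eq_sum]
  simp

lemma sep_one_fin_one : SeparablePerm (1 : Equiv.Perm (Fin 1)) := SeparablePerm.one

lemma univ_fin_one : (univ : Finset (Equiv.Perm (Fin 1))) = {1} := by
  ext π
  simp [perm_fin_one_eq π]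

lemma Apoly_one : Apoly 1 = 1 := by
  unfold Apoly
  rw [univ_fin_one]
  rw [Finset.filter_singleton, if_pos sep_one_fin_one, Finset.sum_singleton, des_one_fin_one,
    pow_zero]

lemma Mpoly_one : Mpoly 1 = 1 := by
  unfold Mpoly
  rw [univ_fin_one, Finset.filter_singleton,
    if_pos ⟨sep_one_fin_one, by rintro ⟨m, h1, h2, _⟩; omega⟩,
    Finset.sum_singleton, des_one_fin_one, pow_zero]

lemma Ppoly_one : Ppoly 1 = 1 := by
  unfold Ppoly
  rw [univ_fin_one, Finset.filter_singleton,
    if_pos ⟨sep_one_fin_one, by rintro ⟨m, h1, h2, _⟩; omega⟩,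
    Finset.sum_singleton, des_one_fin_one, pow_zero]

lemma Apoly_eq_SP_add_SM {n : ℕ} (hn : 2 ≤ n) : Apoly n = SP n + SM n := by
  unfold Apoly SP SM
  rw [← Finset.sum_filter_add_sum_filter_not
    (univ.filter (fun π : Equiv.Perm (Fin n) => SeparablePerm π)) PlusDec]
  congr 1
  · congr 1
    rw [Finset.filter_filter]
  · rw [Finset.filter_filter]
    apply Finset.sum_congr _ (fun _ _ => rfl)
    apply Finset.filter_congr
    intro π _
    constructor
    · rintro ⟨hsep, hnp⟩
      exact ⟨hsep, (sep_plus_or_minus hsep hn).resolve_left hnp⟩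
    · rintro ⟨hsep, hm⟩
      exact ⟨hsep, fun hp => sep_not_plus_and_minus hsep ⟨hp, hm⟩⟩

lemma Mpoly_eq_SP {n : ℕ} (hn : 2 ≤ n) : Mpoly n = SP n := by
  unfold Mpoly SP
  apply Finset.sum_congr _ (fun _ _ => rfl)
  apply Finset.filter_congr
  intro π _
  constructor
  · rintro ⟨hsep, hnm⟩
    exact ⟨hsep, (sep_plus_or_minus hsep hn).resolve_right hnm⟩
  · rintro ⟨hsep, hp⟩
    exact ⟨hsep, fun hm => sep_not_plus_and_minus hsep ⟨hp, hm⟩⟩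

lemma Ppoly_eq_SM {n : ℕ} (hn : 2 ≤ n) : Ppoly n = SM n := by
  unfold Ppoly SM
  apply Finset.sum_congr _ (fun _ _ => rfl)
  apply Finset.filter_congr
  intro π _
  constructor
  · rintro ⟨hsep, hnp⟩
    exact ⟨hsep, (sep_plus_or_minus hsep hn).resolve_left hnp⟩
  · rintro ⟨hsep, hm⟩
    exact ⟨hsep, fun hp => sep_not_plus_and_minus hsep ⟨hp, hm⟩⟩

noncomputable def gplus {n : ℕ} (π : Equiv.Perm (Fin n)) : ℕ :=
  Nat.findGreatest (fun m => 0 < m ∧ IsSplit m π) (n - 1)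

noncomputable def gminus {n : ℕ} (π : Equiv.Perm (Fin n)) : ℕ :=
  Nat.findGreatest (fun m => 0 < m ∧ IsSkewSplit m π) (n - 1)

lemma SP_eq {n : ℕ} (hn : 2 ≤ n) :
    SP n = ∑ m ∈ Finset.Ico 1 n, Apoly m * Ppoly (n - m) := by
  unfold SP
  rw [← Finset.sum_fiberwise_of_maps_to (g := gplus) (t := Finset.Ico 1 n) ?hmaps]
  case hmaps =>
    intro π hπ
    simp only [mem_filter, mem_univ, true_and] at hπ
    obtain ⟨hsep, m, hm0, hmn, hs⟩ := hπ
    have h1 : m ≤ gplus π := Nat.le_findGreatest (by omega) ⟨hm0, hs⟩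
    have h2 : gplus π ≤ n - 1 := Nat.findGreatest_le _
    simp only [Finset.mem_Ico]
    omega
  apply Finset.sum_congr rfl
  intro m hm
  simp only [Finset.mem_Ico] at hm
  have hmn : m + (n - m) = n := by omega
  -- product form
  rw [Apoly, Ppoly, Finset.sum_mul_sum]
  rw [← Finset.sum_product']
  symm
  apply Finset.sum_nbij (fun p => castPerm hmn (directSum p.1 p.2))
  · rintro ⟨σ, τ⟩ hp
    simp only [Finset.mem_product, mem_filter, mem_univ, true_and] at hp
    obtain ⟨hσ, hτ, hτnp⟩ := hp
    simp only [mem_filter, mem_univ, true_and]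
    have hsepd : SeparablePerm (castPerm hmn (directSum σ τ)) :=
      sep_castPerm _ (SeparablePerm.dsum hσ hτ)
    have hsplit : IsSplit m (castPerm hmn (directSum σ τ)) :=
      (isSplit_castPerm _ _).mpr (isSplit_directSum σ τ)
    refine ⟨⟨hsepd, ⟨m, by omega, by omega, hsplit⟩⟩, ?_⟩
    rw [gplus, Nat.findGreatest_eq_iff]
    refine ⟨by omega, fun _ => ⟨by omega, hsplit⟩, ?_⟩
    intro l hl1 hl2
    rintro ⟨hl0, hlsplit⟩
    rw [isSplit_castPerm] at hlsplit
    have e : m + (l - m) = l := by omega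
    have : IsSplit (l - m) τ := by
      apply (isSplit_directSum_shift σ τ).mp
      rw [e]
      exact hlsplit
    exact hτnp ⟨l - m, by omega, by omega, this⟩
  · rintro ⟨σ, τ⟩ hp ⟨σ', τ'⟩ hp' heq
    simp only at heq
    have h2 : directSum σ τ = directSum σ' τ' := by
      have := congrArg (castPerm hmn.symm) heq
      rwa [castPerm_castPerm, castPerm_castPerm, castPerm_self, castPerm_self] at this
    obtain ⟨e1, e2⟩ := directSum_inj h2
    simp [e1, e2]
  · intro π hπ
    simp only [Finset.coe_filter, mem_filter, mem_univ, true_and, Set.mem_setOf_eq] at hπ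
    obtain ⟨⟨hsep, hplus⟩, hg⟩ := hπ
    have hgspec : (0 < m ∧ IsSplit m π) := by
      rw [gplus, Nat.findGreatest_eq_iff] at hg
      refine hg.2.1 (by omega)
    obtain ⟨b, hb, σ, τ, hσ, hτ, hEq⟩ := sep_split hsep m (by omega) (by omega) hgspec.2
    have hbe : b = n - m := by omega
    refine ⟨(σ, castPerm hbe τ), ?_, ?_⟩
    · simp only [Finset.coe_product, Set.mem_prod, Finset.mem_coe, mem_filter, mem_univ, true_and]
      refine ⟨hσ, sep_castPerm _ hτ, ?_⟩
      rintro ⟨j, hj0, hjlt, hjsplit⟩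
      rw [isSplit_castPerm] at hjsplit
      have : IsSplit (m + j) π := by
        rw [hEq, isSplit_castPerm]
        exact (isSplit_directSum_shift σ τ).mpr hjsplit
      rw [gplus, Nat.findGreatest_eq_iff] at hg
      exact hg.2.2 (show m < m + j by omega) (by omega) ⟨by omega, this⟩
    · simp only
      rw [directSum_castPerm_right, castPerm_castPerm, hEq]
  · rintro ⟨σ, τ⟩ hp
    simp only [Finset.mem_product, mem_filter, mem_univ, true_and] at hp
    obtain ⟨hσ, hτ, _⟩ := hp
    simp only
    rw [des_castPerm, des_directSum _ _ hσ.one_le hτ.one_le, pow_add]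

lemma skewSum_castPerm_right {a k k' : ℕ} (h : k = k') (σ : Equiv.Perm (Fin a))
    (τ : Equiv.Perm (Fin k)) :
    skewSum σ (castPerm h τ) = castPerm (by rw [h]) (skewSum σ τ) := by
  subst h; simp

lemma SM_eq {n : ℕ} (hn : 2 ≤ n) :
    SM n = ∑ m ∈ Finset.Ico 1 n, Apoly m * Mpoly (n - m) * X := by
  unfold SM
  rw [← Finset.sum_fiberwise_of_maps_to (g := gminus) (t := Finset.Ico 1 n) ?hmaps]
  case hmaps =>
    intro π hπ
    simp only [mem_filter, mem_univ, true_and] at hπ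
    obtain ⟨hsep, m, hm0, hmn, hs⟩ := hπ
    have h1 : m ≤ gminus π := Nat.le_findGreatest (by omega) ⟨hm0, hs⟩
    have h2 : gminus π ≤ n - 1 := Nat.findGreatest_le _
    simp only [Finset.mem_Ico]
    omega
  apply Finset.sum_congr rfl
  intro m hm
  simp only [Finset.mem_Ico] at hm
  have hmn : m + (n - m) = n := by omega
  rw [mul_assoc, Mpoly, Finset.sum_mul, Apoly, Finset.sum_mul_sum, ← Finset.sum_product']
  symm
  apply Finset.sum_nbij (fun p => castPerm hmn (skewSum p.1 p.2))
  · rintro ⟨σ, τ⟩ hp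
    simp only [Finset.mem_product, mem_filter, mem_univ, true_and] at hp
    obtain ⟨hσ, hτ, hτnm⟩ := hp
    simp only [mem_filter, mem_univ, true_and]
    have hsepd : SeparablePerm (castPerm hmn (skewSum σ τ)) :=
      sep_castPerm _ (SeparablePerm.ssum hσ hτ)
    have hsplit : IsSkewSplit m (castPerm hmn (skewSum σ τ)) :=
      (isSkewSplit_castPerm _ _).mpr (isSkewSplit_skewSum σ τ)
    refine ⟨⟨hsepd, ⟨m, by omega, by omega, hsplit⟩⟩, ?_⟩
    rw [gminus, Nat.findGreatest_eq_iff]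
    refine ⟨by omega, fun _ => ⟨by omega, hsplit⟩, ?_⟩
    intro l hl1 hl2
    rintro ⟨hl0, hlsplit⟩
    rw [isSkewSplit_castPerm] at hlsplit
    have e : m + (l - m) = l := by omega
    have : IsSkewSplit (l - m) τ := by
      apply (isSkewSplit_skewSum_shift σ τ).mp
      rw [e]
      exact hlsplit
    exact hτnm ⟨l - m, by omega, by omega, this⟩
  · rintro ⟨σ, τ⟩ hp ⟨σ', τ'⟩ hp' heq
    simp only at heq
    have h2 : skewSum σ τ = skewSum σ' τ' := by
      have := congrArg (castPerm hmn.symm) heq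
      rwa [castPerm_castPerm, castPerm_castPerm, castPerm_self, castPerm_self] at this
    obtain ⟨e1, e2⟩ := skewSum_inj h2
    simp [e1, e2]
  · intro π hπ
    simp only [Finset.coe_filter, mem_filter, mem_univ, true_and, Set.mem_setOf_eq] at hπ
    obtain ⟨⟨hsep, hminus⟩, hg⟩ := hπ
    have hgspec : (0 < m ∧ IsSkewSplit m π) := by
      rw [gminus, Nat.findGreatest_eq_iff] at hg
      refine hg.2.1 (by omega)
    obtain ⟨b, hb, σ, τ, hσ, hτ, hEq⟩ := sep_skewSplit hsep m (by omega) (by omega) hgspec.2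
    have hbe : b = n - m := by omega
    refine ⟨(σ, castPerm hbe τ), ?_, ?_⟩
    · simp only [Finset.coe_product, Set.mem_prod, Finset.mem_coe, mem_filter, mem_univ, true_and]
      refine ⟨hσ, sep_castPerm _ hτ, ?_⟩
      rintro ⟨j, hj0, hjlt, hjsplit⟩
      rw [isSkewSplit_castPerm] at hjsplit
      have : IsSkewSplit (m + j) π := by
        rw [hEq, isSkewSplit_castPerm]
        exact (isSkewSplit_skewSum_shift σ τ).mpr hjsplit
      rw [gminus, Nat.findGreatest_eq_iff] at hg
      exact hg.2.2 (show m < m + j by omega) (by omega) ⟨by omega, this⟩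
    · simp only
      rw [skewSum_castPerm_right, castPerm_castPerm, hEq]
  · rintro ⟨σ, τ⟩ hp
    simp only [Finset.mem_product, mem_filter, mem_univ, true_and] at hp
    obtain ⟨hσ, hτ, _⟩ := hp
    simp only
    rw [des_castPerm, des_skewSum _ _ hσ.one_le hτ.one_le, pow_add, pow_add, pow_one, mul_assoc]

end Counting

open Finset in
mutual
def alphaC (n : ℕ) (k : ℕ) : ℕ :=
  if n < 2 then (if n = 1 ∧ k = 0 then 1 else 0)
  else if k = 0 then 0 else
    ∑ m ∈ (Finset.Ico 1 n).attach, ∑ p ∈ Finset.HasAntidiagonal.antidiagonal (k-1),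
      gammaC m.1 p.1 * betaC (n - m.1) p.2
termination_by (n, 0)
decreasing_by
  · apply Prod.Lex.left; have := m.2; simp only [Finset.mem_Ico] at this; omega
  · apply Prod.Lex.left; have := m.2; simp only [Finset.mem_Ico] at this; omega

def betaC (n : ℕ) (k : ℕ) : ℕ :=
  if n < 2 then 0
  else
    ∑ m ∈ (Finset.Ico 1 n).attach, ∑ p ∈ Finset.HasAntidiagonal.antidiagonal k,
      gammaC m.1 p.1 * alphaC (n - m.1) p.2
termination_by (n, 0)
decreasing_by
  · apply Prod.Lex.left; have := m.2; simp only [Finset.mem_Ico] at this; omega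
  · apply Prod.Lex.left; have := m.2; simp only [Finset.mem_Ico] at this; omega

def gammaC (n : ℕ) (k : ℕ) : ℕ :=
  if n < 2 then (if n = 1 ∧ k = 0 then 1 else 0)
  else 2 * alphaC n k + betaC n k
termination_by (n, 1)
decreasing_by
  · apply Prod.Lex.right; omega
  · apply Prod.Lex.right; omega
end

lemma alphaC_one (k : ℕ) : alphaC 1 k = if k = 0 then 1 else 0 := by
  rw [alphaC]
  simp only [if_pos (by omega : (1:ℕ) < 2)]
  by_cases h : k = 0 <;> simp [h]

lemma betaC_one (k : ℕ) : betaC 1 k = 0 := by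
  rw [betaC]
  simp

lemma gammaC_one (k : ℕ) : gammaC 1 k = if k = 0 then 1 else 0 := by
  rw [gammaC]
  simp only [if_pos (by omega : (1:ℕ) < 2)]
  by_cases h : k = 0 <;> simp [h]

lemma alphaC_eq {n : ℕ} (hn : 2 ≤ n) (k : ℕ) :
    alphaC n k = if k = 0 then 0 else
      ∑ m ∈ Finset.Ico 1 n, ∑ p ∈ Finset.HasAntidiagonal.antidiagonal (k-1),
        gammaC m p.1 * betaC (n - m) p.2 := by
  rw [alphaC, if_neg (by omega)]
  by_cases h : k = 0
  · simp [h]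
  · rw [if_neg h, if_neg h, ← Finset.sum_attach (Finset.Ico 1 n)
      (fun m => ∑ p ∈ Finset.HasAntidiagonal.antidiagonal (k-1), gammaC m p.1 * betaC (n - m) p.2)]

lemma betaC_eq {n : ℕ} (hn : 2 ≤ n) (k : ℕ) :
    betaC n k = ∑ m ∈ Finset.Ico 1 n, ∑ p ∈ Finset.HasAntidiagonal.antidiagonal k,
        gammaC m p.1 * alphaC (n - m) p.2 := by
  rw [betaC, if_neg (by omega)]
  rw [← Finset.sum_attach (Finset.Ico 1 n)
      (fun m => ∑ p ∈ Finset.HasAntidiagonal.antidiagonal k, gammaC m p.1 * alphaC (n - m) p.2)]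

lemma gammaC_eq {n : ℕ} (hn : 2 ≤ n) (k : ℕ) :
    gammaC n k = 2 * alphaC n k + betaC n k := by
  rw [gammaC, if_neg (by omega)]

lemma vanish : ∀ n : ℕ, (∀ k, n < 2*k+1 → alphaC n k = 0) ∧
    (∀ k, n < 2*k+2 → betaC n k = 0) ∧ (∀ k, n < 2*k+1 → gammaC n k = 0) := by
  intro n
  induction n using Nat.strong_induction_on with
  | _ n ih =>
    by_cases hn : n < 2
    · refine ⟨?_, ?_, ?_⟩
      · intro k hk
        rw [alphaC, if_pos hn, if_neg (by omega)]
      · intro k hk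
        rw [betaC, if_pos hn]
      · intro k hk
        rw [gammaC, if_pos hn, if_neg (by omega)]
    · push_neg at hn
      have halpha : ∀ k, n < 2*k+1 → alphaC n k = 0 := by
        intro k hk
        rw [alphaC_eq hn, if_neg (by omega)]
        apply Finset.sum_eq_zero
        intro m hm
        simp only [Finset.mem_Ico] at hm
        apply Finset.sum_eq_zero
        rintro ⟨a, b⟩ hp
        simp only [Finset.HasAntidiagonal.mem_antidiagonal] at hp
        by_cases h1 : gammaC m a = 0
        · rw [h1, zero_mul]
        · have hma : ¬ (m < 2*a+1) := fun hc => h1 ((ih m (by omega)).2.2 a hc)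
          have : betaC (n - m) b = 0 := by
            apply (ih (n - m) (by omega)).2.1
            omega
          rw [this, mul_zero]
      have hbeta : ∀ k, n < 2*k+2 → betaC n k = 0 := by
        intro k hk
        rw [betaC_eq hn]
        apply Finset.sum_eq_zero
        intro m hm
        simp only [Finset.mem_Ico] at hm
        apply Finset.sum_eq_zero
        rintro ⟨a, b⟩ hp
        simp only [Finset.HasAntidiagonal.mem_antidiagonal] at hp
        by_cases h1 : gammaC m a = 0
        · rw [h1, zero_mul]
        · have hma : ¬ (m < 2*a+1) := fun hc => h1 ((ih m (by omega)).2.2 a hc)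
          have : alphaC (n - m) b = 0 := by
            apply (ih (n - m) (by omega)).1
            omega
          rw [this, mul_zero]
      exact ⟨halpha, hbeta, fun k hk => by
        rw [gammaC_eq hn, halpha k hk, hbeta k (by omega)]⟩

lemma alphaC_vanish {n k : ℕ} (h : n < 2*k+1) : alphaC n k = 0 := (vanish n).1 k h
lemma betaC_vanish {n k : ℕ} (h : n < 2*k+2) : betaC n k = 0 := (vanish n).2.1 k h
lemma gammaC_vanish {n k : ℕ} (h : n < 2*k+1) : gammaC n k = 0 := (vanish n).2.2 k h

section ConvStuff
open Polynomial Finset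

lemma sum_range_antidiag {M : Type*} [AddCommMonoid M] (N : ℕ) (F : ℕ × ℕ → M)
    (hF : ∀ p : ℕ × ℕ, N ≤ p.1 + p.2 → F p = 0) :
    ∑ k ∈ Finset.range N, ∑ p ∈ Finset.HasAntidiagonal.antidiagonal k, F p
      = ∑ p ∈ Finset.range N ×ˢ Finset.range N, F p := by
  classical
  rw [← Finset.sum_filter_add_sum_filter_not (Finset.range N ×ˢ Finset.range N)
    (fun p => p.1 + p.2 < N)]
  have h2 : ∑ p ∈ (Finset.range N ×ˢ Finset.range N).filter (fun p => ¬ p.1 + p.2 < N), F p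
      = 0 := by
    apply Finset.sum_eq_zero
    intro p hp
    simp only [Finset.mem_filter] at hp
    exact hF p (by omega)
  rw [h2, add_zero]
  rw [Finset.sum_sigma']
  apply Finset.sum_nbij' (fun x => x.2) (fun p => ⟨p.1 + p.2, p⟩)
  · rintro ⟨k, p⟩ hx
    simp only [Finset.mem_sigma, Finset.mem_range, Finset.HasAntidiagonal.mem_antidiagonal] at hx
    simp only [Finset.mem_filter, Finset.mem_product, Finset.mem_range]
    omega
  · rintro ⟨a, b⟩ hp
    simp only [Finset.mem_filter, Finset.mem_product, Finset.mem_range] at hp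
    exact Finset.mem_sigma.mpr ⟨Finset.mem_range.mpr (show a + b < N by omega), Finset.HasAntidiagonal.mem_antidiagonal.mpr rfl⟩
  · rintro ⟨k, p⟩ hx
    simp only [Finset.mem_sigma, Finset.mem_range, Finset.HasAntidiagonal.mem_antidiagonal] at hx
    simp only [Sigma.mk.inj_iff, heq_eq_eq]
    exact ⟨hx.2, trivial⟩
  · rintro p hp
    rfl
  · rintro ⟨k, p⟩ hx
    rfl

lemma pad_sum {R N : ℕ} (hRN : R ≤ N) (c : ℕ → ℕ)
    (hc : ∀ k, R ≤ k → c k = 0) (h : ℕ → Polynomial ℤ) :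
    ∑ k ∈ Finset.range R, (c k : Polynomial ℤ) * h k
      = ∑ k ∈ Finset.range N, (c k : Polynomial ℤ) * h k := by
  apply Finset.sum_subset (Finset.range_subset_range.mpr hRN)
  intro x _ hx
  simp only [Finset.mem_range, not_lt] at hx
  rw [hc x hx]
  simp

lemma conv {N u v : ℕ} (f g : ℕ → ℕ)
    (hf : ∀ a, f a ≠ 0 → 2*a ≤ u) (hg : ∀ b, g b ≠ 0 → 2*b ≤ v)
    (huv : u + v < N) :
    (∑ a ∈ Finset.range N, (f a : Polynomial ℤ) * X^a * (1+X)^(u-2*a)) *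
    (∑ b ∈ Finset.range N, (g b : Polynomial ℤ) * X^b * (1+X)^(v-2*b))
    = ∑ k ∈ Finset.range N,
        ((∑ p ∈ Finset.HasAntidiagonal.antidiagonal k, f p.1 * g p.2 : ℕ) : Polynomial ℤ)
          * X^k * (1+X)^(u+v-2*k) := by
  rw [Finset.sum_mul_sum, ← Finset.sum_product']
  have key : ∀ p : ℕ × ℕ,
      (f p.1 : Polynomial ℤ) * X^p.1 * (1+X)^(u-2*p.1) *
        ((g p.2 : Polynomial ℤ) * X^p.2 * (1+X)^(v-2*p.2))
      = ((f p.1 * g p.2 : ℕ) : Polynomial ℤ) * X^(p.1+p.2) * (1+X)^(u+v-2*(p.1+p.2)) := by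
    rintro ⟨a, b⟩
    by_cases h1 : f a = 0
    · simp [h1]
    by_cases h2 : g b = 0
    · simp [h2]
    have ha := hf a h1
    have hb := hg b h2
    have he : (u-2*a) + (v-2*b) = u+v-2*(a+b) := by omega
    push_cast
    rw [← he, pow_add, pow_add]
    ring
  have rhs : ∑ k ∈ Finset.range N,
      ((∑ p ∈ Finset.HasAntidiagonal.antidiagonal k, f p.1 * g p.2 : ℕ) : Polynomial ℤ)
        * X^k * (1+X)^(u+v-2*k)
      = ∑ k ∈ Finset.range N, ∑ p ∈ Finset.HasAntidiagonal.antidiagonal k,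
          ((f p.1 * g p.2 : ℕ) : Polynomial ℤ) * X^(p.1+p.2) * (1+X)^(u+v-2*(p.1+p.2)) := by
    apply Finset.sum_congr rfl
    intro k _
    rw [Nat.cast_sum, Finset.sum_mul, Finset.sum_mul]
    apply Finset.sum_congr rfl
    intro p hp
    simp only [Finset.HasAntidiagonal.mem_antidiagonal] at hp
    rw [hp]
  rw [rhs, sum_range_antidiag]
  · exact Finset.sum_congr rfl (fun p _ => key p)
  · rintro ⟨a, b⟩ hab
    simp only
    by_cases h1 : f a = 0
    · simp [h1]
    by_cases h2 : g b = 0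
    · simp [h2]
    have := hf a h1
    have := hg b h2
    omega

end ConvStuff

section Helpers
open Polynomial Finset

lemma pad_sum' {R N : ℕ} (hRN : R ≤ N) (c : ℕ → ℕ)
    (hc : ∀ k, R ≤ k → c k = 0) (e : ℕ → ℕ) :
    ∑ k ∈ Finset.range R, (c k : Polynomial ℤ) * X^k * (1+X)^(e k)
      = ∑ k ∈ Finset.range N, (c k : Polynomial ℤ) * X^k * (1+X)^(e k) := by
  apply Finset.sum_subset (Finset.range_subset_range.mpr hRN)
  intro x _ hx
  simp only [Finset.mem_range, not_lt] at hx
  rw [hc x hx]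
  simp

lemma xfactor {N : ℕ} (c : ℕ → ℕ) (e : ℕ → ℕ) :
    ∑ k ∈ Finset.range N, (c k : Polynomial ℤ) * X^(k+1) * (1+X)^(e k)
      = X * ∑ k ∈ Finset.range N, (c k : Polynomial ℤ) * X^k * (1+X)^(e k) := by
  rw [Finset.mul_sum]
  apply Finset.sum_congr rfl
  intro k _
  rw [pow_succ]
  ring

lemma exp_congr {N : ℕ} (c : ℕ → ℕ) (e e' : ℕ → ℕ)
    (h : ∀ k, c k ≠ 0 → e k = e' k) :
    ∑ k ∈ Finset.range N, (c k : Polynomial ℤ) * X^k * (1+X)^(e k)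
      = ∑ k ∈ Finset.range N, (c k : Polynomial ℤ) * X^k * (1+X)^(e' k) := by
  apply Finset.sum_congr rfl
  intro k _
  by_cases hc : c k = 0
  · simp [hc]
  · rw [h k hc]

lemma collect_sum {s : Finset ℕ} {N : ℕ} (c : ℕ → ℕ → ℕ) (e : ℕ → ℕ) :
    ∑ m ∈ s, ∑ k ∈ Finset.range N, (c m k : Polynomial ℤ) * X^k * (1+X)^(e k)
      = ∑ k ∈ Finset.range N, ((∑ m ∈ s, c m k : ℕ) : Polynomial ℤ) * X^k * (1+X)^(e k) := by
  rw [Finset.sum_comm]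
  apply Finset.sum_congr rfl
  intro k _
  rw [Nat.cast_sum, Finset.sum_mul, Finset.sum_mul]

lemma shift_sum (N : ℕ) (c : ℕ → ℕ) (hc0 : c 0 = 0) (hctop : c (N+1) = 0) :
    ∑ k ∈ Finset.range (N+1), (c k : Polynomial ℤ) * X^k * (1+X)^(N-2*k)
      = X * ∑ k ∈ Finset.range (N+1), (c (k+1) : Polynomial ℤ) * X^k * (1+X)^(N-2-2*k) := by
  rw [Finset.sum_range_succ']
  rw [hc0]
  rw [Finset.sum_range_succ (fun k => (c (k+1) : Polynomial ℤ) * X^k * (1+X)^(N-2-2*k)) N]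
  rw [hctop]
  simp only [Nat.cast_zero, zero_mul, add_zero, pow_zero, mul_one]
  rw [Finset.mul_sum]
  apply Finset.sum_congr rfl
  intro k _
  have e : N - 2*(k+1) = N - 2 - 2*k := by omega
  rw [e, pow_succ]
  ring

end Helpers

section MainExpansion
open Polynomial Finset
open scoped Classical

theorem expansion : ∀ n : ℕ, 1 ≤ n →
    Apoly n = ∑ k ∈ Finset.range n,
        (gammaC n k : Polynomial ℤ) * X^k * (1+X)^(n-1-2*k) ∧
    Mpoly n = (∑ k ∈ Finset.range n,
        (alphaC n k : Polynomial ℤ) * X^k * (1+X)^(n-1-2*k))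
      + ∑ k ∈ Finset.range n, (betaC n k : Polynomial ℤ) * X^k * (1+X)^(n-2-2*k) ∧
    Ppoly n = (∑ k ∈ Finset.range n,
        (alphaC n k : Polynomial ℤ) * X^k * (1+X)^(n-1-2*k))
      + ∑ k ∈ Finset.range n, (betaC n k : Polynomial ℤ) * X^(k+1) * (1+X)^(n-2-2*k) := by
  intro n
  induction n using Nat.strong_induction_on with
  | _ n ih =>
  intro hn
  by_cases hn2 : n < 2
  · have h1 : n = 1 := by omega
    subst h1
    refine ⟨?_, ?_, ?_⟩ <;>
      simp [Apoly_one, Mpoly_one, Ppoly_one, Finset.sum_range_one, gammaC_one, alphaC_one,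
        betaC_one]
  · push_neg at hn2
    -- support bounds
    have hγsupp : ∀ m a, gammaC m a ≠ 0 → 2*a ≤ m - 1 := by
      intro m a ha
      by_contra hc
      exact ha (gammaC_vanish (by omega))
    have hαsupp : ∀ j b, alphaC j b ≠ 0 → 2*b ≤ j - 1 := by
      intro j b hb
      by_contra hc
      exact hb (alphaC_vanish (by omega))
    have hβsupp : ∀ j b, betaC j b ≠ 0 → 2*b ≤ j - 2 := by
      intro j b hb
      by_contra hc
      exact hb (betaC_vanish (by omega))
    -- padded induction hypotheses
    have hA : ∀ m ∈ Finset.Ico 1 n, Apoly m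
        = ∑ k ∈ Finset.range n, (gammaC m k : Polynomial ℤ) * X^k * (1+X)^(m-1-2*k) := by
      intro m hm
      rw [Finset.mem_Ico] at hm
      rw [(ih m (by omega) (by omega)).1]
      exact pad_sum' (by omega) _ (fun k hk => gammaC_vanish (by omega)) _
    have hP : ∀ m ∈ Finset.Ico 1 n, Ppoly (n - m)
        = (∑ k ∈ Finset.range n, (alphaC (n-m) k : Polynomial ℤ) * X^k * (1+X)^(n-m-1-2*k))
          + X * ∑ k ∈ Finset.range n, (betaC (n-m) k : Polynomial ℤ) * X^k * (1+X)^(n-m-2-2*k)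
        := by
      intro m hm
      rw [Finset.mem_Ico] at hm
      rw [(ih (n-m) (by omega) (by omega)).2.2]
      congr 1
      · exact pad_sum' (by omega) _ (fun k hk => alphaC_vanish (by omega)) _
      · rw [xfactor]
        congr 1
        exact pad_sum' (by omega) _ (fun k hk => betaC_vanish (by omega)) _
    have hM : ∀ m ∈ Finset.Ico 1 n, Mpoly (n - m)
        = (∑ k ∈ Finset.range n, (alphaC (n-m) k : Polynomial ℤ) * X^k * (1+X)^(n-m-1-2*k))
          + ∑ k ∈ Finset.range n, (betaC (n-m) k : Polynomial ℤ) * X^k * (1+X)^(n-m-2-2*k)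
        := by
      intro m hm
      rw [Finset.mem_Ico] at hm
      rw [(ih (n-m) (by omega) (by omega)).2.1]
      congr 1
      · exact pad_sum' (by omega) _ (fun k hk => alphaC_vanish (by omega)) _
      · exact pad_sum' (by omega) _ (fun k hk => betaC_vanish (by omega)) _
    -- convolution identities
    have key1 : ∀ m ∈ Finset.Ico 1 n,
        (∑ k ∈ Finset.range n, (gammaC m k : Polynomial ℤ) * X^k * (1+X)^(m-1-2*k)) *
        (∑ k ∈ Finset.range n, (alphaC (n-m) k : Polynomial ℤ) * X^k * (1+X)^(n-m-1-2*k))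
        = ∑ k ∈ Finset.range n,
            ((∑ p ∈ Finset.HasAntidiagonal.antidiagonal k, gammaC m p.1 * alphaC (n-m) p.2 : ℕ) : Polynomial ℤ)
              * X^k * (1+X)^(n-2-2*k) := by
      intro m hm
      rw [Finset.mem_Ico] at hm
      rw [conv _ _ (hγsupp m) (hαsupp (n-m)) (by omega)]
      simp only [show m - 1 + (n - m - 1) = n - 2 by omega]
    have key2 : ∀ m ∈ Finset.Ico 1 n,
        (∑ k ∈ Finset.range n, (gammaC m k : Polynomial ℤ) * X^k * (1+X)^(m-1-2*k)) *
        (∑ k ∈ Finset.range n, (betaC (n-m) k : Polynomial ℤ) * X^k * (1+X)^(n-m-2-2*k))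
        = ∑ k ∈ Finset.range n,
            ((∑ p ∈ Finset.HasAntidiagonal.antidiagonal k, gammaC m p.1 * betaC (n-m) p.2 : ℕ) : Polynomial ℤ)
              * X^k * (1+X)^(n-3-2*k) := by
      intro m hm
      rw [Finset.mem_Ico] at hm
      rw [conv _ _ (hγsupp m) (hβsupp (n-m)) (by omega)]
      apply exp_congr
      intro k hck
      obtain ⟨p, hp, hpne⟩ := Finset.exists_ne_zero_of_sum_ne_zero hck
      have h1 : gammaC m p.1 ≠ 0 := fun h => hpne (by rw [h, zero_mul])
      have h2 : betaC (n-m) p.2 ≠ 0 := fun h => hpne (by rw [h, mul_zero])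
      have hb1 := hγsupp m p.1 h1
      have hb2 := hβsupp (n-m) p.2 h2
      have hnm2 : ¬ (n - m < 2*p.2 + 2) := fun hc => h2 (betaC_vanish hc)
      omega
    -- the X-shift identity for the alpha part
    have t2' : X * (∑ k ∈ Finset.range n,
          (alphaC n (k+1) : Polynomial ℤ) * X^k * (1+X)^(n-3-2*k))
        = ∑ k ∈ Finset.range n, (alphaC n k : Polynomial ℤ) * X^k * (1+X)^(n-1-2*k) := by
      have hα0 : alphaC n 0 = 0 := by
        rw [alphaC_eq hn2, if_pos rfl]
      have hαtop : alphaC n ((n-1)+1) = 0 := alphaC_vanish (by omega)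
      have hsh := shift_sum (n-1) (alphaC n) hα0 hαtop
      have hnn : n - 1 + 1 = n := by omega
      rw [hnn] at hsh
      rw [hsh]
      have hee := exp_congr (N := n) (fun k => alphaC n (k+1))
        (fun k => n-3-2*k) (fun k => n-1-2-2*k) (fun k _ => by show n-3-2*k = n-1-2-2*k; omega)
      rw [hee]
    -- collected sums
    have tβ : ∑ m ∈ Finset.Ico 1 n, ∑ k ∈ Finset.range n,
          ((∑ p ∈ Finset.HasAntidiagonal.antidiagonal k, gammaC m p.1 * alphaC (n-m) p.2 : ℕ) : Polynomial ℤ)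
            * X^k * (1+X)^(n-2-2*k)
        = ∑ k ∈ Finset.range n, (betaC n k : Polynomial ℤ) * X^k * (1+X)^(n-2-2*k) := by
      rw [collect_sum]
      apply Finset.sum_congr rfl
      intro k _
      rw [← betaC_eq hn2]
    have tα : ∑ m ∈ Finset.Ico 1 n, ∑ k ∈ Finset.range n,
          ((∑ p ∈ Finset.HasAntidiagonal.antidiagonal k, gammaC m p.1 * betaC (n-m) p.2 : ℕ) : Polynomial ℤ)
            * X^k * (1+X)^(n-3-2*k)
        = ∑ k ∈ Finset.range n, (alphaC n (k+1) : Polynomial ℤ) * X^k * (1+X)^(n-3-2*k) := by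
      rw [collect_sum]
      apply Finset.sum_congr rfl
      intro k _
      have he : alphaC n (k+1) = ∑ m ∈ Finset.Ico 1 n,
          ∑ p ∈ Finset.HasAntidiagonal.antidiagonal k, gammaC m p.1 * betaC (n-m) p.2 := by
        rw [alphaC_eq hn2 (k+1), if_neg (by omega)]
        simp only [Nat.add_sub_cancel]
      rw [he]
    -- Mpoly step
    have hMn : Mpoly n = (∑ k ∈ Finset.range n,
          (alphaC n k : Polynomial ℤ) * X^k * (1+X)^(n-1-2*k))
        + ∑ k ∈ Finset.range n, (betaC n k : Polynomial ℤ) * X^k * (1+X)^(n-2-2*k) := by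
      rw [Mpoly_eq_SP hn2, SP_eq hn2]
      have hterm : ∀ m ∈ Finset.Ico 1 n, Apoly m * Ppoly (n-m)
          = (∑ k ∈ Finset.range n,
              ((∑ p ∈ Finset.HasAntidiagonal.antidiagonal k, gammaC m p.1 * alphaC (n-m) p.2 : ℕ) : Polynomial ℤ)
                * X^k * (1+X)^(n-2-2*k))
            + X * ∑ k ∈ Finset.range n,
              ((∑ p ∈ Finset.HasAntidiagonal.antidiagonal k, gammaC m p.1 * betaC (n-m) p.2 : ℕ) : Polynomial ℤ)
                * X^k * (1+X)^(n-3-2*k) := by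
        intro m hm
        rw [hA m hm, hP m hm, mul_add, key1 m hm, mul_left_comm, key2 m hm]
      rw [Finset.sum_congr rfl hterm, Finset.sum_add_distrib, tβ, ← Finset.mul_sum, tα, t2',
        add_comm]
    -- Ppoly step
    have hPn : Ppoly n = (∑ k ∈ Finset.range n,
          (alphaC n k : Polynomial ℤ) * X^k * (1+X)^(n-1-2*k))
        + ∑ k ∈ Finset.range n, (betaC n k : Polynomial ℤ) * X^(k+1) * (1+X)^(n-2-2*k) := by
      rw [Ppoly_eq_SM hn2, SM_eq hn2]
      have hterm : ∀ m ∈ Finset.Ico 1 n, Apoly m * Mpoly (n-m) * X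
          = (∑ k ∈ Finset.range n,
              ((∑ p ∈ Finset.HasAntidiagonal.antidiagonal k, gammaC m p.1 * alphaC (n-m) p.2 : ℕ) : Polynomial ℤ)
                * X^k * (1+X)^(n-2-2*k)) * X
            + (∑ k ∈ Finset.range n,
              ((∑ p ∈ Finset.HasAntidiagonal.antidiagonal k, gammaC m p.1 * betaC (n-m) p.2 : ℕ) : Polynomial ℤ)
                * X^k * (1+X)^(n-3-2*k)) * X := by
        intro m hm
        rw [hA m hm, hM m hm, mul_add, add_mul, key1 m hm, key2 m hm]
      rw [Finset.sum_congr rfl hterm, Finset.sum_add_distrib, ← Finset.sum_mul, ← Finset.sum_mul,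
        tβ, tα, mul_comm (∑ k ∈ Finset.range n,
          (alphaC n (k+1) : Polynomial ℤ) * X^k * (1+X)^(n-3-2*k)) X, t2',
        mul_comm (∑ k ∈ Finset.range n,
          (betaC n k : Polynomial ℤ) * X^k * (1+X)^(n-2-2*k)) X, ← xfactor, add_comm]
    -- Apoly step
    have hAn : Apoly n = ∑ k ∈ Finset.range n,
        (gammaC n k : Polynomial ℤ) * X^k * (1+X)^(n-1-2*k) := by
      have hAMP : Apoly n = Mpoly n + Ppoly n := by
        rw [Apoly_eq_SP_add_SM hn2, Mpoly_eq_SP hn2, Ppoly_eq_SM hn2]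
      rw [hAMP, hMn, hPn, add_add_add_comm]
      have hβcomb : (∑ k ∈ Finset.range n,
            (betaC n k : Polynomial ℤ) * X^k * (1+X)^(n-2-2*k))
          + ∑ k ∈ Finset.range n, (betaC n k : Polynomial ℤ) * X^(k+1) * (1+X)^(n-2-2*k)
          = ∑ k ∈ Finset.range n, (betaC n k : Polynomial ℤ) * X^k * (1+X)^(n-1-2*k) := by
        rw [← Finset.sum_add_distrib]
        apply Finset.sum_congr rfl
        intro k _
        by_cases hb : betaC n k = 0
        · simp [hb]
        · have h2k := hβsupp n k hb
          have hnn2 : ¬ (n < 2*k+2) := fun hc => hb (betaC_vanish hc)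
          have he : n-2-2*k+1 = n-1-2*k := by omega
          rw [← he, pow_succ]
          ring
      rw [hβcomb, ← Finset.sum_add_distrib, ← Finset.sum_add_distrib]
      apply Finset.sum_congr rfl
      intro k _
      rw [gammaC_eq hn2]
      push_cast
      ring
    exact ⟨hAn, hMn, hPn⟩

end MainExpansion

open Polynomial in
open scoped Classical in
/-- Fu–Lin–Zeng: the descent polynomial of the separable permutations of length `n`
is gamma-positive. -/
theorem stmt9 (n : ℕ) (hn : 1 ≤ n) :
    ∃ γ : ℕ → ℕ,
      (∑ π ∈ Finset.univ.filter (fun π : Equiv.Perm (Fin n) => SeparablePerm π),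
        (X : Polynomial ℤ) ^ des π) =
      ∑ k ∈ Finset.range ((n - 1) / 2 + 1),
        (γ k : Polynomial ℤ) * X ^ k * (1 + X) ^ (n - 1 - 2 * k) := by
  refine ⟨gammaC n, ?_⟩
  have h1 := (expansion n hn).1
  have h2 : (∑ π ∈ Finset.univ.filter (fun π : Equiv.Perm (Fin n) => SeparablePerm π),
      (X : Polynomial ℤ) ^ des π) = Apoly n := by
    unfold Apoly
    congr 1
  rw [h2, h1]
  symm
  apply Finset.sum_subset (Finset.range_subset_range.mpr (by omega))
  intro x _ hx
  simp only [Finset.mem_range, not_lt] at hx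
  rw [gammaC_vanish (by omega)]
  simp
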